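/- Let n₁, m₁, n₂, m₂ ∈ ℕ, and let f ∈ L²(ℝ₊^{n₁+m₁}) and g ∈ L²(ℝ₊^{n₂+m₂}) be fully symmetric functions. Then for natural numbers p ≤ n₁ ∧ n₂ and r ≤ m₁ ∧ m₂, the bicontraction satisfies ‖f ⌢_{p,r} g‖²_{L²(ℝ₊^{n₁+n₂−2p}) ⊗ L²(ℝ₊^{m₁+m₂−2r})} = ‖f ⌢_{p+r} g‖²_{L²(ℝ₊^{n₁+n₂+m₁+m₂−2p−2r})}, where ⌢_{p+r} denotes the (p+r)-th nested contraction of f and g viewed as functions of n₁+m₁ and n₂+m₂ variables respectively. -/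

import Mathlib

open MeasureTheory Complex Filter

noncomputable section

/-- Lebesgue measure restricted to the nonnegative orthant of `ℝⁿ`. -/
def orth (n : ℕ) : Measure (Fin n → ℝ) :=
  volume.restrict {x | ∀ i, 0 ≤ x i}

/-- The `p`-th nested contraction of `f ∈ L²(ℝ₊ⁿ)` and `g ∈ L²(ℝ₊ᵐ)`:
`(f ⌢ₚ g)(t₁,…,t_{n+m−2p}) = ∫ f(t₁,…,t_{n−p},s_p,…,s₁) g(s₁,…,s_p,t_{n−p+1},…) ds`. -/
def contr {n m : ℕ} (p : ℕ) (hn : p ≤ n) (hm : p ≤ m)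
    (f : (Fin n → ℝ) → ℂ) (g : (Fin m → ℝ) → ℂ)
    (t : Fin (n + m - 2*p) → ℝ) : ℂ :=
  ∫ s : Fin p → ℝ,
      f (fun i => if h1 : (i : ℕ) < n - p then t ⟨i, by omega⟩
          else s (Fin.rev ⟨(i : ℕ) - (n - p), by have := i.isLt; omega⟩))
    * g (fun i => if h1 : (i : ℕ) < p then s ⟨i, h1⟩
          else t ⟨n - p + ((i : ℕ) - p), by have := i.isLt; omega⟩)
    ∂(orth p)

/-- The `r`-th star contraction `f ⋆ᵣ^{r−1} g`, integrating `r−1` middle variables and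
identifying one further (shared, non-integrated) variable. -/
def starContr {n m : ℕ} (r : ℕ) (hr : 1 ≤ r) (hn : r ≤ n) (hm : r ≤ m)
    (f : (Fin n → ℝ) → ℂ) (g : (Fin m → ℝ) → ℂ)
    (t : Fin (n + m - 2*r + 1) → ℝ) : ℂ :=
  ∫ s : Fin (r - 1) → ℝ,
      f (fun i => if h1 : (i : ℕ) < n - r + 1 then t ⟨i, by omega⟩
          else s (Fin.rev ⟨(i : ℕ) - (n - r + 1), by have := i.isLt; omega⟩))
    * g (fun i => if h1 : (i : ℕ) < r - 1 then s ⟨i, h1⟩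
          else t ⟨n - r + ((i : ℕ) - (r - 1)), by have := i.isLt; omega⟩)
    ∂(orth (r - 1))

/-- The `(p,r)`-bicontraction of `f ∈ L²(ℝ₊^{n₁}) ⊗ L²(ℝ₊^{m₁})` and
`g ∈ L²(ℝ₊^{n₂}) ⊗ L²(ℝ₊^{m₂})`, flattened to a function of
`n₁+n₂+m₁+m₂−2p−2r` variables. -/
def bicontr {n₁ m₁ n₂ m₂ : ℕ} (p r : ℕ)
    (hp₁ : p ≤ n₁) (hp₂ : p ≤ n₂) (hr₁ : r ≤ m₁) (hr₂ : r ≤ m₂)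
    (f : (Fin (n₁ + m₁) → ℝ) → ℂ) (g : (Fin (n₂ + m₂) → ℝ) → ℂ)
    (t : Fin (n₁ + n₂ + m₁ + m₂ - 2*p - 2*r) → ℝ) : ℂ :=
  ∫ sy : (Fin p → ℝ) × (Fin r → ℝ),
      f (fun i =>
          if h1 : (i : ℕ) < n₁ - p then t ⟨i, by have := i.isLt; omega⟩
          else if h2 : (i : ℕ) < n₁ then sy.1 (Fin.rev ⟨(i : ℕ) - (n₁ - p), by omega⟩)
          else if h3 : (i : ℕ) < n₁ + r then sy.2 ⟨(i : ℕ) - n₁, by omega⟩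
          else t ⟨(n₁ - p) + (n₂ - p) + (m₂ - r) + ((i : ℕ) - (n₁ + r)),
            by have := i.isLt; omega⟩)
    * g (fun i =>
          if h1 : (i : ℕ) < p then sy.1 ⟨i, h1⟩
          else if h2 : (i : ℕ) < n₂ then t ⟨(n₁ - p) + ((i : ℕ) - p), by omega⟩
          else if h3 : (i : ℕ) < n₂ + m₂ - r then
            t ⟨(n₁ - p) + (n₂ - p) + ((i : ℕ) - n₂), by omega⟩
          else sy.2 (Fin.rev ⟨(i : ℕ) - (n₂ + m₂ - r), by have := i.isLt; omega⟩))
    ∂((orth p).prod (orth r))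

/-- A function is mirror-symmetric if `f(t₁,…,tₙ) = conj (f(tₙ,…,t₁))` a.e. -/
def MirrorSym {n : ℕ} (f : (Fin n → ℝ) → ℂ) : Prop :=
  ∀ᵐ t ∂(orth n), f t = starRingEnd ℂ (f fun i => t i.rev)

/-- A function is (fully) symmetric if it is real-valued and invariant under all
permutations of its arguments. -/
def FullSym {n : ℕ} (f : (Fin n → ℝ) → ℂ) : Prop :=
  (∀ t, (f t).im = 0) ∧ ∀ σ : Equiv.Perm (Fin n), ∀ t, (f fun i => t (σ i)) = f t

lemma orthSet_meas (n : ℕ) : MeasurableSet {x : Fin n → ℝ | ∀ i, 0 ≤ x i} := by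
  have h : {x : Fin n → ℝ | ∀ i, 0 ≤ x i} = Set.pi Set.univ (fun _ => Set.Ici (0:ℝ)) := by
    ext x; simp only [Set.mem_setOf_eq, Set.mem_univ_pi, Set.mem_Ici]
  rw [h]; exact MeasurableSet.univ_pi fun _ => measurableSet_Ici

def permME {n m : ℕ} (e : Fin n ≃ Fin m) : (Fin m → ℝ) ≃ᵐ (Fin n → ℝ) :=
  (MeasurableEquiv.piCongrLeft (fun _ => ℝ) e).symm

lemma permME_apply {n m : ℕ} (e : Fin n ≃ Fin m) (t : Fin m → ℝ) :
    permME e t = fun i => t (e i) := rfl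

lemma orth_mp {n m : ℕ} (e : Fin n ≃ Fin m) :
    MeasureTheory.MeasurePreserving (permME e) (orth m) (orth n) := by
  have h : MeasurePreserving (permME e) volume volume :=
    (volume_measurePreserving_piCongrLeft (fun _ => ℝ) e).symm _
  have hpre : (permME e) ⁻¹' {x : Fin n → ℝ | ∀ i, 0 ≤ x i}
      = {x : Fin m → ℝ | ∀ i, 0 ≤ x i} := by
    ext t
    simp only [Set.mem_preimage, Set.mem_setOf_eq, permME_apply]
    exact ⟨fun h j => by simpa using h (e.symm j), fun h i => h _⟩
  have h2 := h.restrict_preimage (orthSet_meas n)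
  rwa [hpre] at h2

lemma orth_integral {E : Type*} [NormedAddCommGroup E] [NormedSpace ℝ E]
    {n m : ℕ} (e : Fin n ≃ Fin m) (F : (Fin n → ℝ) → E) :
    ∫ y, F (fun i => y (e i)) ∂(orth m) = ∫ x, F x ∂(orth n) := by
  have h := (orth_mp e).integral_comp' F
  simp only [permME_apply] at h
  exact h

def prodME (p r : ℕ) : (Fin (p+r) → ℝ) ≃ᵐ ((Fin p → ℝ) × (Fin r → ℝ)) :=
  (MeasurableEquiv.piCongrLeft (fun _ => ℝ) finSumFinEquiv).symm.trans
    (MeasurableEquiv.sumPiEquivProdPi (fun _ => ℝ))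

lemma prodME_apply (p r : ℕ) (u : Fin (p+r) → ℝ) :
    prodME p r u = (fun i => u (Fin.castAdd r i), fun j => u (Fin.natAdd p j)) := rfl

lemma prod_mp (p r : ℕ) :
    MeasureTheory.MeasurePreserving (prodME p r) (orth (p+r)) ((orth p).prod (orth r)) := by
  have h1 : MeasurePreserving
      ((MeasurableEquiv.piCongrLeft (fun _ : Fin (p+r) => ℝ) finSumFinEquiv).symm)
      volume volume :=
    (volume_measurePreserving_piCongrLeft (fun _ => ℝ) finSumFinEquiv).symm _
  have h2 : MeasurePreserving (MeasurableEquiv.sumPiEquivProdPi (fun _ : Fin p ⊕ Fin r => ℝ))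
      volume ((volume : Measure (Fin p → ℝ)).prod (volume : Measure (Fin r → ℝ))) := by
    have h := measurePreserving_sumPiEquivProdPi (X := fun _ : Fin p ⊕ Fin r => ℝ)
      (μ := fun _ => (volume : Measure ℝ))
    simpa [volume_pi] using h
  have h3 : MeasurePreserving (prodME p r)
      volume ((volume : Measure (Fin p → ℝ)).prod volume) := h2.comp h1
  have hpre : (prodME p r) ⁻¹'
      ({x : Fin p → ℝ | ∀ i, 0 ≤ x i} ×ˢ {x : Fin r → ℝ | ∀ i, 0 ≤ x i})
      = {x : Fin (p+r) → ℝ | ∀ i, 0 ≤ x i} := by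
    ext u
    simp only [Set.mem_preimage, Set.mem_prod, Set.mem_setOf_eq, prodME_apply]
    constructor
    · rintro ⟨h4, h5⟩ i
      rcases lt_or_ge (i : ℕ) p with h | h
      · have := h4 ⟨i, h⟩
        have he : (Fin.castAdd r ⟨(i:ℕ), h⟩) = i := by apply Fin.ext; simp
        rwa [he] at this
      · have hlt : (i : ℕ) - p < r := by have := i.isLt; omega
        have := h5 ⟨(i:ℕ) - p, hlt⟩
        have he : (Fin.natAdd p ⟨(i:ℕ) - p, hlt⟩) = i := by
          apply Fin.ext; simp; omega
        rwa [he] at this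
    · exact fun h => ⟨fun i => h _, fun j => h _⟩
  have key := h3.restrict_preimage ((orthSet_meas p).prod (orthSet_meas r))
  rw [hpre] at key
  show MeasurePreserving _ (orth (p+r)) ((volume.restrict _).prod (volume.restrict _))
  rw [Measure.prod_restrict]
  exact key

def rhoF (n₁ m₁ n₂ m₂ p r : ℕ) (hp₁ : p ≤ n₁) (hp₂ : p ≤ n₂) (hr₁ : r ≤ m₁) (hr₂ : r ≤ m₂)
    (j : Fin ((n₁+m₁)+(n₂+m₂)-2*(p+r))) : Fin (n₁+n₂+m₁+m₂-2*p-2*r) :=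
  ⟨if (j:ℕ) < n₁ - p then (j:ℕ)
    else if (j:ℕ) < n₁ + m₁ - (p+r) then (n₁-p)+(n₂-p)+(m₂-r)+((j:ℕ)-(n₁-p))
    else (j:ℕ) - (m₁ - r), by have := j.isLt; split_ifs <;> omega⟩

def phiF (n₁ m₁ p r : ℕ) (hp₁ : p ≤ n₁) (hr₁ : r ≤ m₁)
    (i : Fin (n₁+m₁)) : Fin (n₁+m₁) :=
  ⟨if (i:ℕ) < n₁ - p then (i:ℕ)
    else if (i:ℕ) < n₁ then (i:ℕ) + (m₁-r) + r
    else if (i:ℕ) < n₁ + r then (n₁-p)+(m₁-r)+r-1 - ((i:ℕ)-n₁)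
    else (i:ℕ) - (p+r), by have := i.isLt; split_ifs <;> omega⟩

def phiG (n₂ m₂ p r : ℕ) (hp₂ : p ≤ n₂) (hr₂ : r ≤ m₂)
    (i : Fin (n₂+m₂)) : Fin (n₂+m₂) :=
  ⟨if (i:ℕ) < p then (i:ℕ)
    else if (i:ℕ) < n₂ + (m₂ - r) then (i:ℕ) + r
    else n₂ + (m₂-r) + p + r - 1 - (i:ℕ), by have := i.isLt; split_ifs <;> omega⟩

set_option maxHeartbeats 2000000 in
theorem stmt7 (n₁ m₁ n₂ m₂ p r : ℕ)
    (hp₁ : p ≤ n₁) (hp₂ : p ≤ n₂) (hr₁ : r ≤ m₁) (hr₂ : r ≤ m₂)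
    (f : (Fin (n₁ + m₁) → ℝ) → ℂ) (g : (Fin (n₂ + m₂) → ℝ) → ℂ)
    (hf : MeasureTheory.MemLp f 2 (orth (n₁ + m₁)))
    (hg : MeasureTheory.MemLp g 2 (orth (n₂ + m₂)))
    (hfs : FullSym f) (hgs : FullSym g) :
    (∫ t, ‖bicontr p r hp₁ hp₂ hr₁ hr₂ f g t‖^2
        ∂(orth (n₁ + n₂ + m₁ + m₂ - 2*p - 2*r)))
    = ∫ t, ‖contr (p + r) (by omega) (by omega) f g t‖^2
        ∂(orth ((n₁ + m₁) + (n₂ + m₂) - 2*(p + r))) := by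
  have hpr1 : p + r ≤ n₁ + m₁ := by omega
  have hpr2 : p + r ≤ n₂ + m₂ := by omega
  -- the outer re-indexing bijection
  have ρbij : Function.Bijective (rhoF n₁ m₁ n₂ m₂ p r hp₁ hp₂ hr₁ hr₂) := by
    rw [Fintype.bijective_iff_injective_and_card]
    refine ⟨?_, by simp; omega⟩
    intro x y h
    have h' := congrArg Fin.val h
    simp only [rhoF] at h'
    have hx := x.isLt; have hy := y.isLt
    apply Fin.ext
    split_ifs at h' <;> omega
  let ρe : Fin ((n₁+m₁)+(n₂+m₂)-2*(p+r)) ≃ Fin (n₁+n₂+m₁+m₂-2*p-2*r) :=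
    Equiv.ofBijective _ ρbij
  -- permutation for the f-argument
  have φfbij : Function.Bijective (phiF n₁ m₁ p r hp₁ hr₁) := by
    refine Finite.injective_iff_bijective.mp ?_
    intro x y h
    have h' := congrArg Fin.val h
    simp only [phiF] at h'
    have hx := x.isLt; have hy := y.isLt
    apply Fin.ext
    split_ifs at h' <;> omega
  let σf : Equiv.Perm (Fin (n₁+m₁)) := Equiv.ofBijective _ φfbij
  -- permutation for the g-argument
  have φgbij : Function.Bijective (phiG n₂ m₂ p r hp₂ hr₂) := by
    refine Finite.injective_iff_bijective.mp ?_
    intro x y h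
    have h' := congrArg Fin.val h
    simp only [phiG] at h'
    have hx := x.isLt; have hy := y.isLt
    apply Fin.ext
    split_ifs at h' <;> omega
  let σg : Equiv.Perm (Fin (n₂+m₂)) := Equiv.ofBijective _ φgbij
  have main : ∀ t : Fin (n₁+n₂+m₁+m₂-2*p-2*r) → ℝ,
      bicontr p r hp₁ hp₂ hr₁ hr₂ f g t
        = contr (p+r) hpr1 hpr2 f g (fun j => t (ρe j)) := by
    intro t
    rw [bicontr, contr, ← (prod_mp p r).integral_comp']
    refine integral_congr_ae (Filter.Eventually.of_forall fun u => ?_)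
    simp only [prodME_apply]
    set carg : Fin (n₁+m₁) → ℝ := fun i =>
      if h1 : (i : ℕ) < n₁ + m₁ - (p+r) then (fun j => t (ρe j)) ⟨i, by omega⟩
      else u (Fin.rev ⟨(i : ℕ) - (n₁ + m₁ - (p+r)), by have := i.isLt; omega⟩) with hcarg
    set cgarg : Fin (n₂+m₂) → ℝ := fun i =>
      if h1 : (i : ℕ) < p + r then u ⟨i, h1⟩
      else (fun j => t (ρe j)) ⟨n₁ + m₁ - (p+r) + ((i : ℕ) - (p+r)), by have := i.isLt; omega⟩
      with hcgarg
    have hfpart : (fun i : Fin (n₁+m₁) =>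
        if h1 : (i : ℕ) < n₁ - p then t ⟨i, by have := i.isLt; omega⟩
        else if h2 : (i : ℕ) < n₁ then u (Fin.castAdd r (Fin.rev ⟨(i : ℕ) - (n₁ - p), by omega⟩))
        else if h3 : (i : ℕ) < n₁ + r then u (Fin.natAdd p ⟨(i : ℕ) - n₁, by omega⟩)
        else t ⟨(n₁ - p) + (n₂ - p) + (m₂ - r) + ((i : ℕ) - (n₁ + r)),
          by have := i.isLt; omega⟩) = fun i => carg (σf i) := by
      funext i
      have hi := i.isLt
      simp only [hcarg, σf, ρe, Equiv.ofBijective_apply, phiF, rhoF]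
      split_ifs <;>
        first
        | rfl
        | omega
        | (congr 1 <;> apply Fin.ext <;>
            simp [Fin.rev, Fin.castAdd, Fin.natAdd, Fin.castLE] <;> omega)
    have hgpart : (fun i : Fin (n₂+m₂) =>
        if h1 : (i : ℕ) < p then u (Fin.castAdd r ⟨(i:ℕ), h1⟩)
        else if h2 : (i : ℕ) < n₂ then t ⟨(n₁ - p) + ((i : ℕ) - p), by omega⟩
        else if h3 : (i : ℕ) < n₂ + m₂ - r then
          t ⟨(n₁ - p) + (n₂ - p) + ((i : ℕ) - n₂), by omega⟩
        else u (Fin.natAdd p (Fin.rev ⟨(i : ℕ) - (n₂ + m₂ - r), by have := i.isLt; omega⟩)))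
        = fun i => cgarg (σg i) := by
      funext i
      have hi := i.isLt
      simp only [hcgarg, σg, ρe, Equiv.ofBijective_apply, phiG, rhoF]
      split_ifs <;>
        first
        | rfl
        | omega
        | (congr 1 <;> apply Fin.ext <;>
            simp [Fin.rev, Fin.castAdd, Fin.natAdd, Fin.castLE] <;> omega)
    rw [hfpart, hgpart, hfs.2 σf carg, hgs.2 σg cgarg]
  have step1 : (∫ t, ‖bicontr p r hp₁ hp₂ hr₁ hr₂ f g t‖^2
      ∂(orth (n₁ + n₂ + m₁ + m₂ - 2*p - 2*r)))
      = ∫ t, ‖contr (p+r) hpr1 hpr2 f g (fun j => t (ρe j))‖^2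
        ∂(orth (n₁ + n₂ + m₁ + m₂ - 2*p - 2*r)) := by
    refine integral_congr_ae (Filter.Eventually.of_forall fun t => ?_)
    simp only [main t]
  rw [step1]
  exact orth_integral ρe (fun t' => ‖contr (p+r) hpr1 hpr2 f g t'‖^2)

end
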